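/- (Hill) Let $V$ be an $n$-dimensional $\mathbb{Q}$-vector space with basis $w_1, \ldots, w_n$, let $F = \mathbb{Q}((\varepsilon_1))\cdots((\varepsilon_n))$, and set $b_i = w_1 + \varepsilon_i w_2 + \cdots + \varepsilon_i^{n-1} w_n \in V \otimes_{\mathbb{Q}} F$ for $1 \leq i \leq n$. Then for any $\alpha_1, \ldots, \alpha_n \in \mathrm{GL}(V)$, the vectors $\alpha_1 b_1, \ldots, \alpha_n b_n$ form an $F$-basis of $V \otimes_{\mathbb{Q}} F$. -/

import Mathlib

/-- The iterated Laurent series field `𝔽 = ℚ((ε₁))⋯((εₙ))`. -/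
abbrev HillField (n : ℕ) := HahnSeries (Lex (Fin n → ℤ)) ℚ

/-- The variable `εᵢ` of the iterated Laurent series field. -/
noncomputable def eps {n : ℕ} (i : Fin n) : HillField n :=
  HahnSeries.single (toLex (Pi.single i (1 : ℤ))) (1 : ℚ)

lemma eps_pow {n : ℕ} (i : Fin n) (m : ℕ) :
    eps i ^ m = HahnSeries.single (toLex (Pi.single i (m : ℤ))) (1 : ℚ) := by
  rw [eps, HahnSeries.single_pow, one_pow]
  have h : m • (toLex (Pi.single i (1:ℤ)) : Lex (Fin n → ℤ)) = toLex (Pi.single i (m:ℤ)) := by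
    show toLex (m • (Pi.single i (1:ℤ) : Fin n → ℤ)) = _
    congr 1
    funext j
    simp [Pi.single_apply]
  rw [h]

lemma single_prod {n : ℕ} {ι : Type*} (s : Finset ι) (f : ι → Lex (Fin n → ℤ)) (r : ι → ℚ) :
    ∏ i ∈ s, HahnSeries.single (f i) (r i) =
      HahnSeries.single (∑ i ∈ s, f i) (∏ i ∈ s, r i) := by
  classical
  induction s using Finset.induction with
  | empty => simp [HahnSeries.single_zero_one]
  | insert a s h ih => simp [Finset.prod_insert h, Finset.sum_insert h, ih,
      HahnSeries.single_mul_single]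

open Module in
lemma greedy {K W : Type*} [Field K] [AddCommGroup W] [Module K W] [FiniteDimensional K W]
    {η : Type*} [Fintype η] :
    ∀ (m : ℕ), m ≤ finrank K W → ∀ (v : Fin m → η → W),
      (∀ i, Submodule.span K (Set.range (v i)) = ⊤) →
      ∃ k : Fin m → η, LinearIndependent K (fun i => v i (k i))
  | 0, _, v, _ => ⟨fun i => i.elim0, linearIndependent_empty_type⟩
  | (m+1), hm, v, hv => by
    obtain ⟨k0, hk0⟩ := greedy m ((Nat.le_succ m).trans hm)
      (fun i => v i.castSucc) (fun i => hv _)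
    set u := fun i : Fin m => v i.castSucc (k0 i) with hu
    have hspan : Submodule.span K (Set.range u) ≠ ⊤ := by
      intro h
      have h1 := finrank_span_eq_card hk0
      rw [h, finrank_top] at h1
      simp only [Fintype.card_fin] at h1
      omega
    have hex : ∃ j : η, v (Fin.last m) j ∉ Submodule.span K (Set.range u) := by
      by_contra h
      push_neg at h
      exact hspan (top_unique ((hv (Fin.last m)) ▸
        Submodule.span_le.2 (Set.range_subset_iff.2 h)))
    obtain ⟨j, hj⟩ := hex
    refine ⟨(Fin.snoc k0 j : Fin (m+1) → η), ?_⟩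
    have heq : (fun i : Fin (m+1) => v i ((Fin.snoc k0 j : Fin (m+1) → η) i))
        = Fin.snoc u (v (Fin.last m) j) := by
      funext i
      refine Fin.lastCases ?_ ?_ i
      · simp
      · intro i'; simp [hu]
    rw [heq, linearIndependent_fin_snoc]
    exact ⟨hk0, hj⟩

noncomputable def toLexHom (n : ℕ) : (Fin n → ℤ) →+ Lex (Fin n → ℤ) where
  toFun := toLex
  map_zero' := rfl
  map_add' _ _ := rfl

/-- **Hill's Lemma 1.** With `bᵢ = w₁ + εᵢw₂ + ⋯ + εᵢ^{n-1}wₙ`, for any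
`α₁,…,αₙ ∈ GL(V)` the vectors `α₁b₁,…,αₙbₙ` form an `𝔽`-basis of `V ⊗_ℚ 𝔽`.
(We identify `V ⊗_ℚ 𝔽` with `Fin n → 𝔽` via the coordinates of the basis `w`, so that
`αᵢbᵢ` has `j`-th coordinate `∑ₖ Mᵢ(j,k) εᵢᵏ` where `Mᵢ` is the matrix of `αᵢ` in the
basis `w`.) -/
theorem stmt13 (n : ℕ) {V : Type*} [AddCommGroup V] [Module ℚ V]
    (w : Module.Basis (Fin n) ℚ V) (A : Fin n → (V ≃ₗ[ℚ] V)) :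
    let c : Fin n → (Fin n → HillField n) := fun i j =>
      ∑ k : Fin n,
        algebraMap ℚ (HillField n) (LinearMap.toMatrix w w (A i).toLinearMap j k) *
          (eps i) ^ (k : ℕ)
    LinearIndependent (HillField n) c ∧
      Submodule.span (HillField n) (Set.range c) = ⊤ := by
  intro c
  classical
  letI : WellFoundedLT (Fin n) := Finite.to_wellFoundedLT
  open Matrix in
  set M : Fin n → Matrix (Fin n) (Fin n) ℚ :=
    fun i => LinearMap.toMatrix w w (A i).toLinearMap with hMdef
  -- each `M i` is invertible
  have hMunit : ∀ i, IsUnit (M i) := by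
    intro i
    have h1 : LinearMap.toMatrix w w (A i).toLinearMap *
        LinearMap.toMatrix w w (A i).symm.toLinearMap = 1 := by
      rw [← LinearMap.toMatrix_comp w w w,
        show (A i).toLinearMap ∘ₗ (A i).symm.toLinearMap = LinearMap.id by ext x; simp,
        LinearMap.toMatrix_id]
    have h2 : LinearMap.toMatrix w w (A i).symm.toLinearMap *
        LinearMap.toMatrix w w (A i).toLinearMap = 1 := by
      rw [← LinearMap.toMatrix_comp w w w,
        show (A i).symm.toLinearMap ∘ₗ (A i).toLinearMap = LinearMap.id by ext x; simp,
        LinearMap.toMatrix_id]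
    exact ⟨⟨M i, LinearMap.toMatrix w w (A i).symm.toLinearMap, h1, h2⟩, rfl⟩
  -- columns of each `M i` span everything
  have hv : ∀ i, Submodule.span ℚ (Set.range fun l => (M i)ᵀ l) = ⊤ := by
    intro i
    have hli := Matrix.linearIndependent_cols_iff_isUnit.2 (hMunit i)
    exact hli.span_eq_top_of_card_eq_finrank' (by simp)
  -- choose one column from each `M i` greedily
  obtain ⟨k, hk⟩ := greedy (K := ℚ) (W := Fin n → ℚ) n
    (by simp) (fun i l => (M i)ᵀ l) hv
  set N : Matrix (Fin n) (Fin n) ℚ := Matrix.of fun j i => M i j (k i) with hNdef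
  have hNunit : IsUnit N := by
    apply Matrix.linearIndependent_cols_iff_isUnit.1
    exact hk
  have hNdet : N.det ≠ 0 := by
    have := (Matrix.isUnit_iff_isUnit_det N).1 hNunit
    exact isUnit_iff_ne_zero.1 this
  set g : (Fin n → Fin n) → Lex (Fin n → ℤ) :=
    fun x => toLex (fun i => ((x i : ℕ) : ℤ)) with hgdef
  have hg : Function.Injective g := by
    intro a b hab
    funext i
    have := congrArg (fun f : Lex (Fin n → ℤ) => ofLex f i) hab
    simp only [hgdef, ofLex_toLex] at this
    exact Fin.ext (by exact_mod_cast this)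
  set CM : Matrix (Fin n) (Fin n) (HillField n) := Matrix.of (fun j i => c i j) with hCMdef
  have hCMentry : ∀ (j i : Fin n), CM j i =
      ∑ kk : Fin n,
        HahnSeries.single (toLex (Pi.single i ((kk : ℕ) : ℤ))) (M i j kk) := by
    intro j i
    show c i j = _
    apply Finset.sum_congr rfl
    intro kk _
    rw [eps_pow, HahnSeries.algebraMap_apply, Algebra.algebraMap_self, RingHom.id_apply,
      HahnSeries.C_apply, HahnSeries.single_mul_single, zero_add, mul_one]
  have key : CM.det = ∑ x : Fin n → Fin n,
      HahnSeries.single (g x) ((Matrix.of fun j i => M i j (x i)).det) := by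
    rw [Matrix.det_apply']
    have h1 : ∀ σ : Equiv.Perm (Fin n), ∏ i, CM (σ i) i
        = ∑ x : Fin n → Fin n,
          HahnSeries.single (g x) (∏ i, M i (σ i) (x i)) := by
      intro σ
      simp_rw [hCMentry]
      rw [Finset.prod_univ_sum, Fintype.piFinset_univ]
      apply Finset.sum_congr rfl
      intro x _
      rw [single_prod]
      congr 1
      have : (∑ i, (toLex (Pi.single i ((x i : ℕ) : ℤ)) : Lex (Fin n → ℤ)))
          = toLex (∑ i, Pi.single i (((x i : ℕ) : ℤ))) :=
        (map_sum (toLexHom n) _ _).symm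
      rw [this, Finset.univ_sum_single (fun i => ((x i : ℕ) : ℤ))]
    have hz : ∀ (z : ℤ) (a : Lex (Fin n → ℤ)) (r : ℚ),
        ((z : ℤ) : HillField n) * HahnSeries.single a r = HahnSeries.single a ((z : ℚ) * r) := by
      intro z a r
      rw [show ((z : ℤ) : HillField n) = HahnSeries.C ((z : ℤ) : ℚ) from (map_intCast _ z).symm,
        HahnSeries.C_apply, HahnSeries.single_mul_single, zero_add]
    simp_rw [h1, Finset.mul_sum]
    rw [Finset.sum_comm]
    apply Finset.sum_congr rfl
    intro x _
    rw [Matrix.det_apply']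
    rw [show (∑ σ : Equiv.Perm (Fin n),
        (Equiv.Perm.sign σ : ℚ) * ∏ i, (Matrix.of fun j i => M i j (x i)) (σ i) i)
        = ∑ σ : Equiv.Perm (Fin n), ((Equiv.Perm.sign σ : ℚ) * ∏ i, M i (σ i) (x i))
        from rfl]
    have hms : (HahnSeries.single (g x)
          (∑ σ : Equiv.Perm (Fin n), ((Equiv.Perm.sign σ : ℤ) : ℚ) * ∏ i, M i (σ i) (x i))
          : HillField n)
        = ∑ σ : Equiv.Perm (Fin n),
            HahnSeries.single (g x) (((Equiv.Perm.sign σ : ℤ) : ℚ) * ∏ i, M i (σ i) (x i)) :=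
      map_sum (HahnSeries.single.addMonoidHom (g x)) _ _
    rw [hms]
    exact Finset.sum_congr rfl (fun σ _ => hz _ _ _)
  have hco : CM.det.coeff (g k) = N.det := by
    have h2 : CM.det.coeff (g k) = ∑ x : Fin n → Fin n,
        (HahnSeries.single (g x) ((Matrix.of fun j i => M i j (x i)).det)).coeff (g k) := by
      rw [key]
      exact map_sum (HahnSeries.coeff.addMonoidHom (g k)) _ _
    rw [h2, Finset.sum_eq_single k]
    · rw [HahnSeries.coeff_single_same]
    · intro x _ hx
      exact HahnSeries.coeff_single_of_ne (fun h => hx (hg h).symm)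
    · intro h; exact absurd (Finset.mem_univ k) h
  have hCMdet : CM.det ≠ 0 := by
    intro h
    rw [h] at hco
    simp only [HahnSeries.coeff_zero] at hco
    exact hNdet hco.symm
  have hCMunit : IsUnit CM := (Matrix.isUnit_iff_isUnit_det CM).2 (by exact isUnit_iff_ne_zero.mpr hCMdet)
  have hli : LinearIndependent (HillField n) c := by
    have := Matrix.linearIndependent_cols_iff_isUnit.2 hCMunit
    exact this
  refine ⟨hli, ?_⟩
  exact hli.span_eq_top_of_card_eq_finrank' (by simp)
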